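/- Let G be a C² function on an interval [b₀, b₁] of length less than π/4 satisfying G'' + 4G = g₀ for a constant g₀ ∈ ℝ. If G'(b₀) > 0 and G'(b₁) > 0, then G'(θ) > 0 for all θ ∈ (b₀, b₁). -/

import Mathlib

open Real Set

private lemma wronskian_const (b₀ b₁ : ℝ) (u u' v v' : ℝ → ℝ)
    (hu : ∀ θ ∈ Icc b₀ b₁, HasDerivWithinAt u (u' θ) (Icc b₀ b₁) θ)
    (hu' : ∀ θ ∈ Icc b₀ b₁, HasDerivWithinAt u' (-4 * u θ) (Icc b₀ b₁) θ)
    (hv : ∀ θ, HasDerivAt v (v' θ) θ)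
    (hv' : ∀ θ, HasDerivAt v' (-4 * v θ) θ)
    (hucont : ContinuousOn u (Icc b₀ b₁)) (hu'cont : ContinuousOn u' (Icc b₀ b₁)) :
    ∀ θ ∈ Icc b₀ b₁, u θ * v' θ - u' θ * v θ = u b₀ * v' b₀ - u' b₀ * v b₀ := by
  have hvc : Continuous v := continuous_iff_continuousAt.2 fun θ => (hv θ).continuousAt
  have hv'c : Continuous v' := continuous_iff_continuousAt.2 fun θ => (hv' θ).continuousAt
  have hcont : ContinuousOn (fun θ => u θ * v' θ - u' θ * v θ) (Icc b₀ b₁) :=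
    (hucont.mul hv'c.continuousOn).sub (hu'cont.mul hvc.continuousOn)
  have hderiv : ∀ x ∈ Ico b₀ b₁,
      HasDerivWithinAt (fun θ => u θ * v' θ - u' θ * v θ) 0 (Ici x) x := by
    intro x hx
    have hx' : x ∈ Icc b₀ b₁ := ⟨hx.1, hx.2.le⟩
    have hd : HasDerivWithinAt (fun θ => u θ * v' θ - u' θ * v θ)
        ((u' x * v' x + u x * (-4 * v x)) - ((-4 * u x) * v x + u' x * v' x))
        (Icc b₀ b₁) x :=
      ((hu x hx').mul (hv' x).hasDerivWithinAt).sub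
        ((hu' x hx').mul (hv x).hasDerivWithinAt)
    have hd0 : HasDerivWithinAt (fun θ => u θ * v' θ - u' θ * v θ) 0 (Icc b₀ b₁) x := by
      convert hd using 1; ring
    exact hd0.mono_of_mem_nhdsWithin (Icc_mem_nhdsGE_of_mem hx)
  intro θ hθ
  exact constant_of_has_deriv_right_zero hcont hderiv θ hθ

theorem stmt8 (b₀ b₁ g₀ : ℝ) (hlt : b₀ < b₁) (hlen : b₁ - b₀ < π / 4)
    (G G' : ℝ → ℝ)
    (hG : ∀ θ ∈ Icc b₀ b₁, HasDerivWithinAt G (G' θ) (Icc b₀ b₁) θ)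
    (hG' : ∀ θ ∈ Icc b₀ b₁, HasDerivWithinAt G' (g₀ - 4 * G θ) (Icc b₀ b₁) θ)
    (hGcont : ContinuousOn G (Icc b₀ b₁)) (hG'cont : ContinuousOn G' (Icc b₀ b₁))
    (h0 : 0 < G' b₀) (h1 : 0 < G' b₁) :
    ∀ θ ∈ Ioo b₀ b₁, 0 < G' θ := by
  -- second derivative of G' : derivative of (g₀ - 4 * G) is -4 * G'
  have hu' : ∀ θ ∈ Icc b₀ b₁,
      HasDerivWithinAt (fun θ => g₀ - 4 * G θ) (-4 * G' θ) (Icc b₀ b₁) θ := by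
    intro θ hθ
    have := ((hG θ hθ).const_mul 4).const_sub g₀
    exact this.congr_deriv (by ring)
  have hu'cont : ContinuousOn (fun θ => g₀ - 4 * G θ) (Icc b₀ b₁) :=
    continuousOn_const.sub (continuousOn_const.mul hGcont)
  -- v₁ θ = sin (2*(θ - b₀)), v₁' = 2 * cos (2*(θ - b₀))
  have hlin : ∀ c θ : ℝ, HasDerivAt (fun θ => 2 * (θ - c)) 2 θ := by
    intro c θ
    simpa using ((hasDerivAt_id θ).sub_const c).const_mul 2
  have hv1 : ∀ θ, HasDerivAt (fun θ => Real.sin (2 * (θ - b₀)))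
      (2 * Real.cos (2 * (θ - b₀))) θ := by
    intro θ
    have := (Real.hasDerivAt_sin (2 * (θ - b₀))).comp θ (hlin b₀ θ)
    exact this.congr_deriv (by ring)
  have hv1' : ∀ θ, HasDerivAt (fun θ => 2 * Real.cos (2 * (θ - b₀)))
      (-4 * Real.sin (2 * (θ - b₀))) θ := by
    intro θ
    have h := ((Real.hasDerivAt_cos (2 * (θ - b₀))).comp θ (hlin b₀ θ)).const_mul 2
    exact h.congr_deriv (by ring)
  -- v₂ θ = sin (2*(b₁ - θ)), v₂' = -2 * cos (2*(b₁ - θ))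
  have hlin2 : ∀ θ : ℝ, HasDerivAt (fun θ => 2 * (b₁ - θ)) (-2) θ := by
    intro θ
    have := ((hasDerivAt_id θ).const_sub b₁).const_mul 2
    exact this.congr_deriv (by ring)
  have hv2 : ∀ θ, HasDerivAt (fun θ => Real.sin (2 * (b₁ - θ)))
      (-2 * Real.cos (2 * (b₁ - θ))) θ := by
    intro θ
    have := (Real.hasDerivAt_sin (2 * (b₁ - θ))).comp θ (hlin2 θ)
    exact this.congr_deriv (by ring)
  have hv2' : ∀ θ, HasDerivAt (fun θ => -2 * Real.cos (2 * (b₁ - θ)))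
      (-4 * Real.sin (2 * (b₁ - θ))) θ := by
    intro θ
    have h := ((Real.hasDerivAt_cos (2 * (b₁ - θ))).comp θ (hlin2 θ)).const_mul (-2)
    exact h.congr_deriv (by ring)
  have W1 := wronskian_const b₀ b₁ G' (fun θ => g₀ - 4 * G θ) _ _ hG' hu' hv1 hv1'
    hG'cont hu'cont
  have W2 := wronskian_const b₀ b₁ G' (fun θ => g₀ - 4 * G θ) _ _ hG' hu' hv2 hv2'
    hG'cont hu'cont
  intro θ hθ
  have hθ' : θ ∈ Icc b₀ b₁ := ⟨hθ.1.le, hθ.2.le⟩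
  have hb1 : b₁ ∈ Icc b₀ b₁ := ⟨hlt.le, le_refl _⟩
  have e1 := W1 θ hθ'
  have e2 : G' θ * (-2 * Real.cos (2 * (b₁ - θ))) - (g₀ - 4 * G θ) * Real.sin (2 * (b₁ - θ))
      = G' b₁ * (-2 * Real.cos (2 * (b₁ - b₁))) - (g₀ - 4 * G b₁) * Real.sin (2 * (b₁ - b₁)) := by
    rw [W2 θ hθ', W2 b₁ hb1]
  simp only [sub_self, mul_zero, Real.sin_zero, Real.cos_zero, mul_one, sub_zero] at e1 e2
  -- sin positivity facts
  have hπ : (0:ℝ) < π := Real.pi_pos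
  have hsA : 0 < Real.sin (2 * (θ - b₀)) := by
    apply Real.sin_pos_of_pos_of_lt_pi
    · nlinarith [hθ.1]
    · nlinarith [hθ.2, hlen]
  have hsB : 0 < Real.sin (2 * (b₁ - θ)) := by
    apply Real.sin_pos_of_pos_of_lt_pi
    · nlinarith [hθ.2]
    · nlinarith [hθ.1, hlen]
  have hsAB : 0 < Real.sin (2 * (b₁ - b₀)) := by
    apply Real.sin_pos_of_pos_of_lt_pi
    · nlinarith
    · nlinarith
  -- combine: G' θ * 2 * sin(2*(b₁-b₀)) = 2*G' b₀ * sin(2*(b₁-θ)) + 2*G' b₁ * sin(2*(θ-b₀))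
  have key : G' θ * (2 * Real.sin (2 * (b₁ - b₀)))
      = 2 * G' b₀ * Real.sin (2 * (b₁ - θ)) + 2 * G' b₁ * Real.sin (2 * (θ - b₀)) := by
    have hadd : Real.sin (2 * (b₁ - b₀))
        = Real.sin (2 * (θ - b₀)) * Real.cos (2 * (b₁ - θ))
          + Real.cos (2 * (θ - b₀)) * Real.sin (2 * (b₁ - θ)) := by
      have : 2 * (b₁ - b₀) = 2 * (θ - b₀) + 2 * (b₁ - θ) := by ring
      rw [this, Real.sin_add]
    have c1 := congrArg (fun x => x * Real.sin (2 * (b₁ - θ))) e1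
    have c2 := congrArg (fun x => x * Real.sin (2 * (θ - b₀))) e2
    linear_combination c1 - c2 + 2 * G' θ * hadd
  nlinarith [key, mul_pos hsA h1, mul_pos hsB h0, hsAB]
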